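/- Let F = F(A) be the free group on A = {a_1,…,a_k} with k ≥ 2 and let m ≥ 1. The set of m-tuples (u_1,…,u_m) ∈ C_{m,A} such that for every i ≠ j the element u_i is conjugate in F to neither u_j nor u_j^{-1} is exponentially generic in C_{m,A}. -/

import Mathlib

/-!
STATEMENT 11: for k ≥ 2, m ≥ 1, the set of m-tuples in C_{m,A} such that
for i ≠ j the entry u_i is conjugate in F(A) to neither u_j nor u_j⁻¹ is
exponentially generic in C_{m,A}.
-/

/-- The length of the freely reduced word representing `g`. -/
def wlen {α : Type} [DecidableEq α] (g : FreeGroup α) : ℕ := g.toWord.length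

/-- `g` is cyclically reduced: in its reduced word the first letter is not
the inverse of the last letter. -/
def CyclicallyReduced {α : Type} [DecidableEq α] (g : FreeGroup α) : Prop :=
  ∀ x y : α × Bool, g.toWord.head? = some x → g.toWord.getLast? = some y →
    x ≠ (y.1, !y.2)

/-- `C_{m,A}`: the set of `m`-tuples of cyclically reduced words in the free
group of rank `k`, all entries of equal length. -/
def Cset (k m : ℕ) : Set (Fin m → FreeGroup (Fin k)) :=
  {T | (∀ i, CyclicallyReduced (T i)) ∧ ∀ i j, wlen (T i) = wlen (T j)}

/-- `γ_A(n,U)`: the number of tuples in `U` all of whose entries have length `n`. -/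
noncomputable def gammaA {k m : ℕ} (U : Set (Fin m → FreeGroup (Fin k))) (n : ℕ) : ℕ :=
  Set.ncard {T | T ∈ U ∧ ∀ i, wlen (T i) = n}

/-- `U` is an exponentially generic subset of `C_{m,A}`:
`γ(n,U)/γ(n,C_{m,A}) → 1` exponentially fast. -/
def ExpGenericIn {k m : ℕ} (U : Set (Fin m → FreeGroup (Fin k))) : Prop :=
  U ⊆ Cset k m ∧ ∃ C : ℝ, 0 < C ∧ ∃ q : ℝ, 0 < q ∧ q < 1 ∧
    ∀ n : ℕ, |((gammaA U n : ℝ) / (gammaA (Cset k m) n : ℝ)) - 1| ≤ C * q ^ n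

set_option linter.unusedSectionVars false

open List FreeGroup

namespace S11
variable {α : Type} [DecidableEq α]

def linv (x : α × Bool) : α × Bool := (x.1, !x.2)

@[simp] lemma linv_linv (x : α × Bool) : linv (linv x) = x := by simp [linv]

lemma linv_ne_iff {x y : α × Bool} : x ≠ linv y ↔ y ≠ linv x := by
  constructor <;> (intro h he; apply h; rw [he, linv_linv])

def Rd (L : List (α × Bool)) : Prop := List.Chain' (fun a b => b ≠ linv a) L

lemma Rd.reduce_eq {L : List (α × Bool)} (h : Rd L) : FreeGroup.reduce L = L := by
  induction L with
  | nil => rfl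
  | cons x L ih =>
    have hL : Rd L := h.tail
    rw [FreeGroup.reduce.cons]
    rw [ih hL]
    cases L with
    | nil => rfl
    | cons y t =>
      have hxy : y ≠ linv x := (List.isChain_cons_cons.1 h).1
      simp only []
      rw [if_neg]
      rintro ⟨h1, h2⟩
      exact hxy (Prod.ext h1.symm (by simp [linv, h2]))
set_option linter.unusedSectionVars false

lemma not_chain'_decomp {L : List (α × Bool)} (h : ¬ Rd L) :
    ∃ l₁ x l₂, L = l₁ ++ x :: linv x :: l₂ := by
  induction L with
  | nil => exact absurd List.isChain_nil h
  | cons x L ih =>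
    cases L with
    | nil => exact absurd (List.isChain_singleton x) h
    | cons y t =>
      rw [Rd, List.Chain', List.isChain_cons_cons] at h
      push_neg at h
      by_cases hy : y = linv x
      · exact ⟨[], x, t, by rw [hy]; rfl⟩
      · obtain ⟨l₁, a, l₂, hl⟩ := ih (h hy)
        exact ⟨x :: l₁, a, l₂, by rw [hl]; rfl⟩

lemma rd_of_reduce_eq {L : List (α × Bool)} (h : FreeGroup.reduce L = L) : Rd L := by
  by_contra hc
  obtain ⟨l₁, x, l₂, rfl⟩ := not_chain'_decomp hc
  have hstep : FreeGroup.Red.Step (l₁ ++ x :: linv x :: l₂) (l₁ ++ l₂) := by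
    have := @FreeGroup.Red.Step.not α l₁ l₂ x.1 x.2
    simpa [linv] using this
  have h2 := FreeGroup.reduce.Step.eq hstep
  have h3 : (FreeGroup.reduce (l₁ ++ l₂)).length ≤ (l₁ ++ l₂).length :=
    (FreeGroup.reduce.red (L := l₁ ++ l₂)).length_le
  rw [← h2, h] at h3
  simp at h3

lemma rd_toWord (g : FreeGroup α) : Rd g.toWord := rd_of_reduce_eq g.reduce_toWord

lemma Rd.toWord_mk {L : List (α × Bool)} (h : Rd L) : (FreeGroup.mk L).toWord = L := by
  rw [FreeGroup.toWord_mk, h.reduce_eq]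

lemma Rd.append_right {a b : List (α × Bool)} (h : Rd (a ++ b)) : Rd b :=
  (List.isChain_append.1 h).2.1

lemma Rd.append_left {a b : List (α × Bool)} (h : Rd (a ++ b)) : Rd a :=
  (List.isChain_append.1 h).1

/-- cyclically reduced list -/
def CRd (L : List (α × Bool)) : Prop :=
  Rd L ∧ ∀ x ∈ L.head?, ∀ y ∈ L.getLast?, x ≠ linv y

lemma CRd.rotate_one {L : List (α × Bool)} (h : CRd L) : CRd (L.rotate 1) := by
  obtain ⟨hrd, hcyc⟩ := h
  cases L with
  | nil => exact ⟨List.isChain_nil, by simp⟩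
  | cons x t =>
    have hrot : (x :: t).rotate 1 = t ++ [x] := by
      simpa using List.rotate_cons_succ t x 0
    rw [hrot]
    cases t with
    | nil => exact ⟨List.isChain_singleton x, by simpa using hcyc⟩
    | cons y s =>
      have hlast : (x :: y :: s).getLast? = some ((y :: s).getLast (by simp)) := by
        rw [List.getLast?_cons_cons, List.getLast?_eq_getLast]
      have hxa : x ≠ linv ((y :: s).getLast (by simp)) := by
        exact hcyc x (by simp) _ hlast
      have hyx : y ≠ linv x := (List.isChain_cons_cons.1 hrd).1
      constructor
      · rw [Rd, List.Chain', List.isChain_append]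
        refine ⟨hrd.tail, List.isChain_singleton x, ?_⟩
        intro p hp q hq
        simp only [List.head?_cons, Option.mem_def, Option.some_inj] at hq
        subst hq
        rw [List.getLast?_eq_getLast (by simp), Option.mem_def, Option.some_inj] at hp
        rw [← hp]
        exact hxa
      · intro p hp q hq
        have h1 : (y :: s ++ [x]).head? = some y := rfl
        have h2 : (y :: s ++ [x]).getLast? = some x := by
          show ((y :: s) ++ [x]).getLast? = some x
          exact List.getLast?_concat
        rw [h1, Option.mem_def, Option.some_inj] at hp
        rw [h2, Option.mem_def, Option.some_inj] at hq
        subst hp; subst hq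
        exact hyx

lemma CRd.rotate {L : List (α × Bool)} (h : CRd L) (r : ℕ) : CRd (L.rotate r) := by
  induction r with
  | zero => simpa using h
  | succ n ih =>
    have := ih.rotate_one
    rwa [List.rotate_rotate] at this

lemma invRev_eq (L : List (α × Bool)) : FreeGroup.invRev L = (L.map linv).reverse := rfl

lemma invRev_cons (x : α × Bool) (L : List (α × Bool)) :
    FreeGroup.invRev (x :: L) = FreeGroup.invRev L ++ [linv x] := by
  simp [invRev_eq]

@[simp] lemma invRev_singleton (x : α × Bool) :
    FreeGroup.invRev [x] = [linv x] := by simp [invRev_eq]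

lemma head?_invRev (L : List (α × Bool)) :
    (FreeGroup.invRev L).head? = L.getLast?.map linv := by
  rw [invRev_eq, List.head?_reverse, List.getLast?_map]

lemma getLast?_invRev (L : List (α × Bool)) :
    (FreeGroup.invRev L).getLast? = L.head?.map linv := by
  rw [invRev_eq, List.getLast?_reverse, List.head?_map]

lemma Rd.invRev {L : List (α × Bool)} (h : Rd L) : Rd (FreeGroup.invRev L) := by
  rw [Rd, List.Chain', invRev_eq, List.isChain_reverse, List.isChain_map]
  refine h.imp ?_
  intro a b hab
  show linv a ≠ linv (linv b)
  rw [linv_linv]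
  exact Ne.symm hab

lemma CRd.invRev {L : List (α × Bool)} (h : CRd L) : CRd (FreeGroup.invRev L) := by
  refine ⟨h.1.invRev, ?_⟩
  intro x hx y hy
  rw [head?_invRev, Option.mem_def, Option.map_eq_some_iff] at hx
  rw [getLast?_invRev, Option.mem_def, Option.map_eq_some_iff] at hy
  obtain ⟨a, ha, rfl⟩ := hx
  obtain ⟨b, hb, rfl⟩ := hy
  have := h.2 b hb a ha
  show linv a ≠ linv (linv b)
  rw [linv_linv]
  exact Ne.symm this

lemma mk_mul_linv (x : α × Bool) : FreeGroup.mk [x] * FreeGroup.mk [linv x] = 1 := by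
  rw [← invRev_singleton, ← FreeGroup.inv_mk, mul_inv_cancel]

lemma linv_mul_mk (x : α × Bool) : FreeGroup.mk [linv x] * FreeGroup.mk [x] = 1 := by
  have := mk_mul_linv (linv x)
  rwa [linv_linv] at this

lemma rd_sandwich {x : α × Bool} {mid : List (α × Bool)} (hne : mid ≠ []) (hmid : Rd mid)
    (hhead : ∀ c ∈ mid.head?, c ≠ linv x)
    (hlast : ∀ c ∈ mid.getLast?, x ≠ c) :
    Rd ([x] ++ mid ++ [linv x]) := by
  rw [List.append_assoc, Rd, List.Chain', List.isChain_append]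
  refine ⟨List.isChain_singleton x, ?_, ?_⟩
  · rw [List.isChain_append]
    refine ⟨hmid, List.isChain_singleton (linv x), ?_⟩
    intro p hp q hq
    simp only [List.head?_cons, Option.mem_def, Option.some_inj] at hq
    subst hq
    intro he
    exact hlast p hp (by rw [← linv_linv x, he, linv_linv])
  · intro p hp q hq
    simp only [List.getLast?_singleton, Option.mem_def, Option.some_inj] at hp
    subst hp
    rcases mid with _ | ⟨c, mid'⟩
    · exact absurd rfl hne
    · simp only [List.cons_append, List.head?_cons, Option.mem_def, Option.some_inj] at hq
      subst hq
      exact hhead c (by simp)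

/-- Conjugation normal form: any conjugate of a nontrivial cyclically reduced
element `v` has reduced word `z ++ (rotation of v) ++ z⁻¹`. -/
lemma conj_form (v : FreeGroup α) (hv : CRd v.toWord) (hne : v ≠ 1) :
    ∀ N (g : FreeGroup α), g.toWord.length ≤ N → ∃ z r,
      Rd (z ++ v.toWord.rotate r ++ FreeGroup.invRev z) ∧
      g * v * g⁻¹ = FreeGroup.mk (z ++ v.toWord.rotate r ++ FreeGroup.invRev z) := by
  have hvlen : v.toWord ≠ [] := fun h => hne (FreeGroup.toWord_eq_nil_iff.1 h)
  intro N
  induction N with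
  | zero =>
    intro g hg
    have h0 : g.toWord = [] := List.length_eq_zero_iff.1 (Nat.le_zero.1 hg)
    have hg1 : g = 1 := FreeGroup.toWord_eq_nil_iff.1 h0
    refine ⟨[], 0, ?_, ?_⟩
    · simpa [FreeGroup.invRev] using hv.1
    · simp [hg1, FreeGroup.invRev, FreeGroup.mk_toWord]
  | succ N ih =>
    intro g hg
    rcases hx : g.toWord with _ | ⟨x, t⟩
    · exact ih g (by rw [hx]; simp)
    have hred : Rd (x :: t) := by rw [← hx]; exact rd_toWord g
    have hrdt : Rd t := hred.tail
    have hg₁w : (FreeGroup.mk t).toWord = t := hrdt.toWord_mk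
    have hglen : (FreeGroup.mk t).toWord.length ≤ N := by
      rw [hg₁w]
      have h' := hg; rw [hx] at h'; simpa using h'
    obtain ⟨z, r, hRd, hEq⟩ := ih (FreeGroup.mk t) hglen
    obtain ⟨w, hw⟩ : ∃ w, v.toWord.rotate r = w := ⟨_, rfl⟩
    rw [hw] at hRd hEq
    have hgfact : g = FreeGroup.mk [x] * FreeGroup.mk t := by
      rw [FreeGroup.mul_mk, List.singleton_append, ← hx, FreeGroup.mk_toWord]
    have hwcr : CRd w := hw ▸ hv.rotate r
    have hwne : w ≠ [] := by
      rw [← hw]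
      intro h
      have hl := List.length_rotate v.toWord r
      rw [h] at hl
      exact hvlen (List.length_eq_zero_iff.1 hl.symm)
    have key : g * v * g⁻¹ =
        FreeGroup.mk [x] * FreeGroup.mk (z ++ w ++ FreeGroup.invRev z) * FreeGroup.mk [linv x] := by
      rw [hgfact, ← hEq, ← invRev_singleton, ← FreeGroup.inv_mk]
      group
    rcases z with _ | ⟨y, z₁⟩
    · -- z = []
      simp only [List.nil_append, FreeGroup.invRev, List.map_nil, List.reverse_nil,
        List.append_nil] at hRd hEq key
      rcases hwl : w with _ | ⟨c, w₁⟩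
      · exact absurd hwl hwne
      by_cases hc : c = linv x
      · -- left cancellation: rotate one more
        refine ⟨[], r + 1, ?_, ?_⟩
        · simpa [FreeGroup.invRev] using (hv.rotate (r+1)).1
        · have hrot1 : v.toWord.rotate (r + 1) = w₁ ++ [c] := by
            rw [← List.rotate_rotate, hw, hwl]
            simpa using List.rotate_cons_succ w₁ c 0
          simp only [List.nil_append, FreeGroup.invRev, List.map_nil, List.reverse_nil,
            List.append_nil]
          have e1 : FreeGroup.mk (linv x :: w₁) =
              FreeGroup.mk [linv x] * FreeGroup.mk w₁ := by rw [FreeGroup.mul_mk]; rfl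
          rw [key, hwl, hrot1, hc, e1, ← mul_assoc, mk_mul_linv, one_mul, FreeGroup.mul_mk]
      · by_cases hd : w.getLast? = some x
        · -- right cancellation
          obtain ⟨w₂, hww⟩ : ∃ w₂, w = w₂ ++ [x] := by
            refine ⟨w.dropLast, ?_⟩
            conv_lhs => rw [← List.dropLast_append_getLast hwne]
            congr 1
            rw [List.getLast?_eq_getLast hwne, Option.some_inj] at hd
            rw [hd]
          refine ⟨[], r + w₂.length, ?_, ?_⟩
          · simpa [FreeGroup.invRev] using (hv.rotate (r + w₂.length)).1
          · have hrot2 : v.toWord.rotate (r + w₂.length) = x :: w₂ := by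
              rw [← List.rotate_rotate, hw, hww,
                List.rotate_eq_drop_append_take (by simp),
                List.drop_left, List.take_left]
              rfl
            simp only [List.nil_append, FreeGroup.invRev, List.map_nil, List.reverse_nil,
              List.append_nil]
            rw [key, hww, hrot2]
            calc FreeGroup.mk [x] * FreeGroup.mk (w₂ ++ [x]) * FreeGroup.mk [linv x]
                = FreeGroup.mk [x] * (FreeGroup.mk w₂ *
                    (FreeGroup.mk [x] * FreeGroup.mk [linv x])) := by
                  rw [← FreeGroup.mul_mk]; group
              _ = FreeGroup.mk [x] * FreeGroup.mk w₂ := by rw [mk_mul_linv, mul_one]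
              _ = FreeGroup.mk ([x] ++ w₂) := FreeGroup.mul_mk
              _ = FreeGroup.mk (x :: w₂) := by rw [List.singleton_append]
        · -- no cancellation on either side
          refine ⟨[x], r, ?_, ?_⟩
          · rw [invRev_singleton, hw]
            refine rd_sandwich hwne hRd ?_ ?_
            · intro p hp
              rw [hwl] at hp
              simp only [List.head?_cons, Option.mem_def, Option.some_inj] at hp
              subst hp; exact hc
            · intro p hp he
              subst he
              exact hd hp
          · rw [invRev_singleton, key]
            rw [FreeGroup.mul_mk, FreeGroup.mul_mk, hw]
    · -- z = y :: z₁
      by_cases hy : y = linv x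
      · -- cancellation with z
        refine ⟨z₁, r, ?_, ?_⟩
        · rw [hw]
          have h1 : Rd ((z₁ ++ w ++ FreeGroup.invRev z₁) ++ [linv y]) := by
            have := hRd
            rw [invRev_cons] at this
            have h2 : (y :: z₁) ++ w ++ (FreeGroup.invRev z₁ ++ [linv y]) =
                [y] ++ ((z₁ ++ w ++ FreeGroup.invRev z₁) ++ [linv y]) := by simp
            rw [h2] at this
            exact this.append_right
          exact h1.append_left
        · rw [hw, key]
          have h2 : (y :: z₁) ++ w ++ FreeGroup.invRev (y :: z₁) =
              [y] ++ ((z₁ ++ w ++ FreeGroup.invRev z₁) ++ [linv y]) := by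
            rw [invRev_cons]; simp
          rw [h2, ← FreeGroup.mul_mk, ← FreeGroup.mul_mk (L₁ := z₁ ++ w ++ FreeGroup.invRev z₁)]
          rw [hy]
          rw [show linv (linv x) = x from linv_linv x]
          rw [← mul_assoc, ← mul_assoc, mk_mul_linv, one_mul, mul_assoc, mk_mul_linv, mul_one]
      · -- no cancellation: grow z
        refine ⟨x :: y :: z₁, r, ?_, ?_⟩
        · rw [hw]
          have h2 : (x :: y :: z₁) ++ w ++ FreeGroup.invRev (x :: y :: z₁) =
              [x] ++ ((y :: z₁) ++ w ++ FreeGroup.invRev (y :: z₁)) ++ [linv x] := by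
            rw [invRev_cons (x := x)]; simp
          rw [h2]
          refine rd_sandwich (by simp) hRd ?_ ?_
          · intro p hp
            simp only [List.cons_append, List.head?_cons, Option.mem_def, Option.some_inj] at hp
            subst hp; exact hy
          · intro p hp he
            subst he
            have hlast : ((y :: z₁) ++ w ++ FreeGroup.invRev (y :: z₁)).getLast? =
                some (linv y) := by
              rw [List.getLast?_append_of_ne_nil _ (by simp [invRev_cons]), invRev_cons]
              exact List.getLast?_concat
            rw [hlast, Option.mem_def, Option.some_inj] at hp
            exact hy (by rw [← hp, linv_linv])
        · rw [hw, key]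
          have h2 : (x :: y :: z₁) ++ w ++ FreeGroup.invRev (x :: y :: z₁) =
              [x] ++ ((y :: z₁) ++ w ++ FreeGroup.invRev (y :: z₁)) ++ [linv x] := by
            rw [invRev_cons (x := x)]; simp
          rw [h2, FreeGroup.mul_mk, FreeGroup.mul_mk]

lemma cyclicallyReduced_iff_crd {g : FreeGroup α} :
    CyclicallyReduced g ↔ CRd g.toWord := by
  constructor
  · intro h
    refine ⟨rd_toWord g, ?_⟩
    intro x hx y hy
    exact h x y hx hy
  · intro h x y hx hy
    exact h.2 x hx y hy

lemma cyclicallyReduced_inv {g : FreeGroup α} (h : CyclicallyReduced g) :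
    CyclicallyReduced g⁻¹ := by
  rw [cyclicallyReduced_iff_crd] at *
  rw [FreeGroup.toWord_inv]
  exact h.invRev

lemma wlen_inv (g : FreeGroup α) : wlen g⁻¹ = wlen g := by
  rw [wlen, wlen, FreeGroup.toWord_inv, FreeGroup.invRev_length]

lemma isConj_rotate {u v : FreeGroup α} (hu : CyclicallyReduced u) (hv : CyclicallyReduced v)
    (hvne : v ≠ 1) (h : IsConj v u) :
    ∃ ρ : ℕ, ρ < v.toWord.length ∧ u = FreeGroup.mk (v.toWord.rotate ρ) := by
  obtain ⟨g, hg⟩ := isConj_iff.1 h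
  obtain ⟨z, r, hRd, hEq⟩ := conj_form v (cyclicallyReduced_iff_crd.1 hv) hvne
    g.toWord.length g le_rfl
  rw [hg] at hEq
  have hlpos : 0 < v.toWord.length := by
    rcases Nat.eq_zero_or_pos v.toWord.length with h0 | h0
    · exact absurd (FreeGroup.toWord_eq_nil_iff.1 (List.length_eq_zero_iff.1 h0)) hvne
    · exact h0
  cases z with
  | nil =>
    refine ⟨r % v.toWord.length, Nat.mod_lt _ hlpos, ?_⟩
    rw [List.rotate_mod, hEq]
    simp [FreeGroup.invRev]
  | cons y z₁ =>
    exfalso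
    have hwne : v.toWord.rotate r ≠ [] := by
      intro h0
      have hl := List.length_rotate v.toWord r
      rw [h0] at hl
      simp at hl
      omega
    have huw : u.toWord = (y :: z₁) ++ v.toWord.rotate r ++ FreeGroup.invRev (y :: z₁) := by
      rw [hEq, hRd.toWord_mk]
    have h1 : u.toWord.head? = some y := by rw [huw]; rfl
    have h2 : u.toWord.getLast? = some (linv y) := by
      rw [huw, List.getLast?_append_of_ne_nil _ (by simp [invRev_cons]), invRev_cons]
      exact List.getLast?_concat
    have := hu y (linv y) h1 h2
    exact this (by simp [linv])

lemma finite_wlen_eq (k n : ℕ) : {g : FreeGroup (Fin k) | wlen g = n}.Finite := by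
  have h : {g : FreeGroup (Fin k) | wlen g = n} =
      FreeGroup.toWord ⁻¹' {l : List (Fin k × Bool) | l.length = n} := rfl
  rw [h]
  exact Set.Finite.preimage FreeGroup.toWord_injective.injOn (List.finite_length_eq _ n)

lemma ncard_univ_pi {m : ℕ} {G : Type*} (s : Fin m → Set G) :
    (Set.pi Set.univ s).ncard = ∏ i, (s i).ncard := by
  rw [← Nat.card_coe_set_eq]
  rw [Nat.card_congr (Equiv.Set.univPi s)]
  rw [Nat.card_pi]
  exact Finset.prod_congr rfl fun i _ => Nat.card_coe_set_eq (s i)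

lemma ncard_iUnion_le' {ι β : Type*} [Fintype ι] (s : ι → Set β) :
    (⋃ i, s i).ncard ≤ ∑ i : ι, (s i).ncard := by
  classical
  suffices h : ∀ t : Finset ι, (⋃ i ∈ t, s i).ncard ≤ ∑ i ∈ t, (s i).ncard by
    have := h Finset.univ
    simpa using this
  intro t
  induction t using Finset.induction with
  | empty => simp
  | @insert _ _ hx ih =>
    rw [Finset.set_biUnion_insert, Finset.sum_insert hx]
    exact le_trans (Set.ncard_union_le _ _) (Nat.add_le_add_left ih _)

lemma all_true_crd {α : Type} [DecidableEq α] {l : List (α × Bool)}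
    (h : ∀ x ∈ l, x.2 = true) : CRd l := by
  constructor
  · rw [Rd, List.Chain', List.isChain_iff_getElem]
    intro i hi heq
    have h1 := h (l.get ⟨i, by omega⟩) (List.get_mem l _)
    have h2 := h (l.get ⟨i+1, by omega⟩) (List.get_mem l _)
    rw [List.get_eq_getElem, heq] at h2
    simp only [linv] at h2
    simp only [Bool.not_eq_true'] at h2
    simp only [List.get_eq_getElem] at h1 h2
    rw [h1] at h2
    exact absurd h2 (by simp)
  · intro x hx y hy
    have h1 := h x (List.mem_of_mem_head? hx)
    have h2 := h y (List.mem_of_mem_getLast? hy)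
    intro heq
    rw [heq] at h1
    simp [linv, h2] at h1

lemma two_pow_le_ncard_CR (k n : ℕ) (hk : 2 ≤ k) :
    2 ^ n ≤ {g : FreeGroup (Fin k) | CyclicallyReduced g ∧ wlen g = n}.ncard := by
  classical
  set CR := {g : FreeGroup (Fin k) | CyclicallyReduced g ∧ wlen g = n} with hCR
  have hfin : CR.Finite := (finite_wlen_eq k n).subset fun g hg => hg.2
  set f : (Fin n → Fin k) → FreeGroup (Fin k) :=
    fun σ => FreeGroup.mk (List.ofFn fun i => (σ i, true)) with hf
  have hofn : ∀ σ : Fin n → Fin k, ∀ x ∈ List.ofFn (fun i => ((σ i : Fin k), true)), x.2 = true := by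
    intro σ x hx
    rw [List.mem_ofFn] at hx
    obtain ⟨i, rfl⟩ := hx
    rfl
  have hcrd : ∀ σ : Fin n → Fin k, CRd (List.ofFn fun i => ((σ i : Fin k), true)) := fun σ =>
    all_true_crd (hofn σ)
  have hword : ∀ σ : Fin n → Fin k, (f σ).toWord = List.ofFn fun i => ((σ i : Fin k), true) := fun σ =>
    (hcrd σ).1.toWord_mk
  have hmaps : ∀ σ ∈ (Set.univ : Set (Fin n → Fin k)), f σ ∈ CR := by
    intro σ _
    refine ⟨?_, ?_⟩
    · rw [cyclicallyReduced_iff_crd, hword]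
      exact hcrd σ
    · rw [wlen, hword, List.length_ofFn]
  have hinj : Set.InjOn f Set.univ := by
    intro σ _ σ' _ he
    have := congrArg FreeGroup.toWord he
    rw [hword, hword] at this
    have h3 := List.ofFn_injective this
    funext i
    have h4 := congrArg (fun F => (F i).1) h3
    simpa using h4
  calc 2 ^ n ≤ k ^ n := Nat.pow_le_pow_left hk n
    _ = (Set.univ : Set (Fin n → Fin k)).ncard := by
        rw [Set.ncard_univ, Nat.card_eq_fintype_card]
        simp
    _ ≤ CR.ncard := Set.ncard_le_ncard_of_injOn f hmaps hinj hfin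

def Uset (k m : ℕ) : Set (Fin m → FreeGroup (Fin k)) :=
  {T | T ∈ Cset k m ∧ ∀ i j, i ≠ j → ¬ IsConj (T i) (T j) ∧ ¬ IsConj (T i) (T j)⁻¹}

def CRset (k n : ℕ) : Set (FreeGroup (Fin k)) := {g | CyclicallyReduced g ∧ wlen g = n}

lemma CRset_finite (k n : ℕ) : (CRset k n).Finite :=
  (finite_wlen_eq k n).subset fun _ hg => hg.2

lemma SC_eq (k m n : ℕ) :
    {T : Fin m → FreeGroup (Fin k) | T ∈ Cset k m ∧ ∀ i, wlen (T i) = n} =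
      Set.pi Set.univ (fun _ => CRset k n) := by
  ext T
  constructor
  · rintro ⟨⟨hcyc, _⟩, hlen⟩ i _
    exact ⟨hcyc i, hlen i⟩
  · intro h
    refine ⟨⟨fun i => (h i (Set.mem_univ i)).1, fun i j => ?_⟩, fun i => (h i (Set.mem_univ i)).2⟩
    rw [(h i (Set.mem_univ i)).2, (h j (Set.mem_univ j)).2]

lemma gamma_Cset_eq (k m n : ℕ) : gammaA (Cset k m) n = (CRset k n).ncard ^ m := by
  rw [gammaA, SC_eq, ncard_univ_pi]
  simp

lemma SC_finite (k m n : ℕ) :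
    {T : Fin m → FreeGroup (Fin k) | T ∈ Cset k m ∧ ∀ i, wlen (T i) = n}.Finite := by
  rw [SC_eq]
  exact Set.Finite.pi fun _ => CRset_finite k n

lemma gammaU_le (k m n : ℕ) : gammaA (Uset k m) n ≤ gammaA (Cset k m) n := by
  refine Set.ncard_le_ncard ?_ (SC_finite k m n)
  rintro T ⟨hU, hlen⟩
  exact ⟨hU.1, hlen⟩

def Aset (k m n : ℕ) (p : Fin m × Fin m × Fin n × Bool) : Set (Fin m → FreeGroup (Fin k)) :=
  {T | p.1 ≠ p.2.1 ∧ (∀ l, T l ∈ CRset k n) ∧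
    T p.1 = FreeGroup.mk ((cond p.2.2.2 (T p.2.1) (T p.2.1)⁻¹).toWord.rotate p.2.2.1)}

lemma bad_cover (k m n : ℕ) (hn : 1 ≤ n) :
    {T : Fin m → FreeGroup (Fin k) | T ∈ Cset k m ∧ ∀ i, wlen (T i) = n} \
      {T | T ∈ Uset k m ∧ ∀ i, wlen (T i) = n} ⊆ ⋃ p, Aset k m n p := by
  rintro T ⟨⟨hC, hlen⟩, hnot⟩
  have hTl : ∀ l, T l ∈ CRset k n := fun l => ⟨hC.1 l, hlen l⟩
  have hbad : ¬ (∀ i j, i ≠ j → ¬ IsConj (T i) (T j) ∧ ¬ IsConj (T i) (T j)⁻¹) := by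
    intro hgood
    exact hnot ⟨⟨hC, hgood⟩, hlen⟩
  push_neg at hbad
  obtain ⟨i, j, hij, hconj⟩ := hbad
  have hTj1 : T j ≠ 1 := by
    intro h1
    have := hlen j
    rw [h1] at this
    rw [wlen, FreeGroup.toWord_one] at this
    simp at this
    omega
  by_cases hc : IsConj (T i) (T j)
  · obtain ⟨ρ, hρ, heq⟩ := isConj_rotate (hC.1 i) (hC.1 j) hTj1 hc.symm
    rw [show (T j).toWord.length = n from hlen j] at hρ
    refine Set.mem_iUnion.2 ⟨(i, j, ⟨ρ, hρ⟩, true), hij, hTl, ?_⟩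
    simpa using heq
  · have hb := hconj hc
    have hinv1 : (T j)⁻¹ ≠ 1 := inv_ne_one.2 hTj1
    obtain ⟨ρ, hρ, heq⟩ := isConj_rotate (hC.1 i) (cyclicallyReduced_inv (hC.1 j)) hinv1 hb.symm
    have hl : ((T j)⁻¹).toWord.length = n := by
      have := wlen_inv (T j)
      rw [wlen] at this
      rw [this]
      exact hlen j
    rw [hl] at hρ
    refine Set.mem_iUnion.2 ⟨(i, j, ⟨ρ, hρ⟩, false), hij, hTl, ?_⟩
    simpa using heq

lemma ncard_Aset_le (k m n : ℕ) (p : Fin m × Fin m × Fin n × Bool) :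
    (Aset k m n p).ncard ≤ (CRset k n).ncard ^ (m - 1) := by
  classical
  obtain ⟨i, j, ρ, ε⟩ := p
  set D := Set.pi Set.univ
    (fun l => if l = i then ({1} : Set (FreeGroup (Fin k))) else CRset k n) with hD
  have hDfin : D.Finite := Set.Finite.pi fun l => by
    split_ifs
    · exact Set.finite_singleton 1
    · exact CRset_finite k n
  have hmaps : ∀ T ∈ Aset k m n (i, j, ρ, ε), Function.update T i 1 ∈ D := by
    rintro T ⟨hij, hTl, hTi⟩ l _
    by_cases hl : l = i
    · subst hl; simp
    · simp only [Function.update_of_ne hl, if_neg hl]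
      exact hTl l
  have hinj : Set.InjOn (fun T => Function.update T i 1) (Aset k m n (i, j, ρ, ε)) := by
    rintro T ⟨hij, hTl, hTi⟩ T' ⟨_, hTl', hTi'⟩ he
    have hothers : ∀ l, l ≠ i → T l = T' l := by
      intro l hl
      have := congrFun he l
      simpa [Function.update_of_ne hl] using this
    funext l
    by_cases hl : l = i
    · subst hl
      rw [hTi, hTi', hothers j (Ne.symm hij)]
    · exact hothers l hl
  calc (Aset k m n (i, j, ρ, ε)).ncard ≤ D.ncard :=
        Set.ncard_le_ncard_of_injOn _ hmaps hinj hDfin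
    _ = ∏ l, (if l = i then ({1} : Set (FreeGroup (Fin k))) else CRset k n).ncard :=
        ncard_univ_pi _
    _ = (CRset k n).ncard ^ (m - 1) := by
        rw [← Finset.mul_prod_erase Finset.univ _ (Finset.mem_univ i)]
        rw [if_pos rfl, Set.ncard_singleton, one_mul]
        rw [Finset.prod_congr rfl (fun l hl => by
          rw [if_neg (Finset.ne_of_mem_erase hl)])]
        rw [Finset.prod_const, Finset.card_erase_of_mem (Finset.mem_univ i),
          Finset.card_univ, Fintype.card_fin]

lemma bad_le (k m n : ℕ) (hn : 1 ≤ n) :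
    gammaA (Cset k m) n ≤
      gammaA (Uset k m) n + (m * m * (n * 2)) * (CRset k n).ncard ^ (m - 1) := by
  classical
  set SC := {T : Fin m → FreeGroup (Fin k) | T ∈ Cset k m ∧ ∀ i, wlen (T i) = n} with hSC
  set SU := {T : Fin m → FreeGroup (Fin k) | T ∈ Uset k m ∧ ∀ i, wlen (T i) = n} with hSU
  have hsub : SU ⊆ SC := fun T hT => ⟨hT.1.1, hT.2⟩
  have h1 : gammaA (Cset k m) n = SC.ncard := rfl
  have h2 : gammaA (Uset k m) n = SU.ncard := rfl
  rw [h1, h2]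
  have hcut : SC.ncard ≤ SU.ncard + (SC \ SU).ncard := by
    conv_lhs => rw [← Set.union_diff_cancel hsub]
    exact Set.ncard_union_le _ _
  refine le_trans hcut (Nat.add_le_add_left ?_ _)
  have hstep : (SC \ SU).ncard ≤ (⋃ p, Aset k m n p).ncard := by
    refine Set.ncard_le_ncard (bad_cover k m n hn) ?_
    refine Set.Finite.subset (Set.Finite.pi (fun _ : Fin m => CRset_finite k n)) ?_
    refine Set.iUnion_subset fun p T hT => ?_
    intro l _
    exact hT.2.1 l
  refine le_trans hstep ?_
  refine le_trans (ncard_iUnion_le' _) ?_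
  calc ∑ p : Fin m × Fin m × Fin n × Bool, (Aset k m n p).ncard
      ≤ ∑ _p : Fin m × Fin m × Fin n × Bool, (CRset k n).ncard ^ (m - 1) :=
        Finset.sum_le_sum fun p _ => ncard_Aset_le k m n p
    _ = (m * m * (n * 2)) * (CRset k n).ncard ^ (m - 1) := by
        rw [Finset.sum_const, Finset.card_univ]
        simp only [Fintype.card_prod, Fintype.card_fin, Fintype.card_bool, smul_eq_mul]
        ring

end S11

theorem statement11 (k m : ℕ) (hk : 2 ≤ k) (hm : 1 ≤ m) :
    ExpGenericIn {T : Fin m → FreeGroup (Fin k) | T ∈ Cset k m ∧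
      ∀ i j, i ≠ j → ¬ IsConj (T i) (T j) ∧ ¬ IsConj (T i) (T j)⁻¹} := by
  show ExpGenericIn (S11.Uset k m)
  constructor
  · exact fun T hT => hT.1
  refine ⟨4 * (m:ℝ) ^ 2 + 1, by positivity, 3 / 4, by norm_num, by norm_num, ?_⟩
  intro n
  have hle : gammaA (S11.Uset k m) n ≤ gammaA (Cset k m) n := S11.gammaU_le k m n
  set x : ℝ := (gammaA (S11.Uset k m) n : ℝ) with hx
  set y : ℝ := (gammaA (Cset k m) n : ℝ) with hy
  have hx0 : 0 ≤ x := by positivity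
  have hxy : x ≤ y := by rw [hx, hy]; exact_mod_cast hle
  rcases Nat.eq_zero_or_pos n with hn | hn
  · -- n = 0 : crude bound
    subst hn
    rw [pow_zero, mul_one]
    have hratle : x / y ≤ 1 := by
      rcases eq_or_lt_of_le (show (0:ℝ) ≤ y by positivity) with h | h
      · rw [← h, div_zero]; norm_num
      · rw [div_le_one h]; exact hxy
    have hrat0 : 0 ≤ x / y := by positivity
    rw [abs_of_nonpos (by linarith)]
    have : (0:ℝ) ≤ (m:ℝ)^2 := by positivity
    linarith
  · -- main case
    set c : ℕ := (S11.CRset k n).ncard with hc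
    have hgC : gammaA (Cset k m) n = c ^ m := S11.gamma_Cset_eq k m n
    have hbad := S11.bad_le k m n hn
    have hc2 : 2 ^ n ≤ c := S11.two_pow_le_ncard_CR k n hk
    have hcpos : 0 < c := lt_of_lt_of_le (pow_pos (by norm_num : (0:ℕ) < 2) n) hc2
    set cc : ℝ := (c : ℝ) with hcc
    have hccpos : (0:ℝ) < cc := by rw [hcc]; exact_mod_cast hcpos
    have hyeq : y = cc ^ (m - 1) * cc := by
      rw [hy, hgC]
      push_cast
      rw [← pow_succ, Nat.sub_add_cancel hm]
    have hypos : (0:ℝ) < y := by rw [hyeq]; positivity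
    set B : ℝ := ((m : ℝ) * m * (n * 2)) with hB
    have hB0 : 0 ≤ B := by positivity
    have hbadR : y ≤ x + B * cc ^ (m - 1) := by
      rw [hx, hy, hB, hcc]
      have := hbad
      push_cast
      exact_mod_cast this
    have e1 : |x / y - 1| = (y - x) / y := by
      rw [abs_of_nonpos]
      · rw [neg_sub, sub_div, div_self hypos.ne']
      · rw [sub_nonpos, div_le_one hypos]; exact hxy
    rw [e1]
    have step1 : (y - x) / y ≤ (B * cc ^ (m - 1)) / y := by
      gcongr
      linarith
    have step2 : (B * cc ^ (m - 1)) / y = B / cc := by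
      rw [hyeq]
      field_simp
    have hc2R : (2:ℝ) ^ n ≤ cc := by rw [hcc]; exact_mod_cast hc2
    have step3 : B / cc ≤ B / 2 ^ n := by
      rw [div_le_div_iff₀ hccpos (by positivity)]
      exact mul_le_mul_of_nonneg_left hc2R hB0
    have hber : (n : ℝ) ≤ 2 * (3 / 2) ^ n := by
      have h := one_add_mul_le_pow (show (-2:ℝ) ≤ 1/2 by norm_num) n
      have h32 : (1 + 1/2 : ℝ) = 3/2 := by norm_num
      rw [h32] at h
      nlinarith [h]
    have step4 : B / 2 ^ n ≤ (4 * (m:ℝ) ^ 2 + 1) * (3 / 4) ^ n := by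
      rw [div_le_iff₀ (by positivity : (0:ℝ) < 2 ^ n)]
      have h34 : ((3:ℝ) / 4) ^ n * 2 ^ n = (3 / 2) ^ n := by
        rw [← mul_pow]; norm_num
      rw [mul_assoc, h34, hB]
      have hP : (0:ℝ) ≤ (3/2:ℝ) ^ n := by positivity
      nlinarith [hber, hP,
        mul_le_mul_of_nonneg_left hber (show (0:ℝ) ≤ 2 * (m:ℝ)^2 by positivity)]
    calc (y - x) / y ≤ (B * cc ^ (m - 1)) / y := step1
      _ = B / cc := step2
      _ ≤ B / 2 ^ n := step3
      _ ≤ (4 * (m:ℝ) ^ 2 + 1) * (3 / 4) ^ n := step4
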